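/- Given d+1 sets A_1, ..., A_{d+1} in R^d and a point a lying in the convex hull of each A_i, there exist points a_i in A_i (one from each set) such that a lies in the convex hull of {a_1, ..., a_{d+1}}. -/

import Mathlib

open Metric Finset Module

local notation "⟪" x ", " y "⟫" => @inner ℝ _ _ x y

/-- Moving from `x` slightly towards `y` decreases the distance to `a`,
when `⟪a - x, y - x⟫ > 0`. -/
lemma colorful_step {E : Type} [NormedAddCommGroup E] [InnerProductSpace ℝ E] {a x y : E}
    (hc : 0 < ⟪a - x, y - x⟫) :
    ∃ θ : ℝ, 0 < θ ∧ θ ≤ 1 ∧ dist a (x + θ • (y - x)) < dist a x := by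
  have hyx : y - x ≠ 0 := by
    intro h
    rw [h, inner_zero_right] at hc
    exact lt_irrefl _ hc
  have hn : 0 < ‖y - x‖ ^ 2 := pow_pos (norm_pos_iff.mpr hyx) 2
  set c : ℝ := ⟪a - x, y - x⟫ with hcdef
  set θ : ℝ := min 1 (c / ‖y - x‖ ^ 2) with hθdef
  have hθpos : 0 < θ := lt_min one_pos (div_pos hc hn)
  have hθ1 : θ ≤ 1 := min_le_left _ _
  have hθle : θ * ‖y - x‖ ^ 2 ≤ c := by
    rw [← le_div_iff₀ hn]
    exact min_le_right _ _
  refine ⟨θ, hθpos, hθ1, ?_⟩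
  have hsq : dist a (x + θ • (y - x)) ^ 2 < dist a x ^ 2 := by
    rw [dist_eq_norm, dist_eq_norm]
    have heq : a - (x + θ • (y - x)) = (a - x) - θ • (y - x) := by abel
    rw [heq, norm_sub_sq_real, real_inner_smul_right, norm_smul, Real.norm_eq_abs, mul_pow,
      sq_abs]
    nlinarith [mul_pos hθpos hc, mul_le_mul_of_nonneg_left hθle hθpos.le]
  exact lt_of_pow_lt_pow_left₀ 2 dist_nonneg hsq

/-- Colorful Carathéodory in an arbitrary finite-dimensional real inner product space. -/
theorem colorful_main {E : Type} [NormedAddCommGroup E] [InnerProductSpace ℝ E]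
    [FiniteDimensional ℝ E] {d : ℕ} (hd : finrank ℝ E ≤ d)
    (A : Fin (d + 1) → Set E) (a : E) (ha : ∀ i, a ∈ convexHull ℝ (A i)) :
    ∃ t : Fin (d + 1) → E, (∀ i, t i ∈ A i) ∧ a ∈ convexHull ℝ (Set.range t) := by
  -- reduce to finite sets
  have hfin : ∀ i, ∃ B : Finset E, ↑B ⊆ A i ∧ a ∈ convexHull ℝ (B : Set E) := by
    intro i
    have := ha i
    rw [convexHull_eq_union_convexHull_finite_subsets] at this
    simp only [Set.mem_iUnion] at this
    obtain ⟨B, hB, haB⟩ := this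
    exact ⟨B, hB, haB⟩
  choose B hBA haB using hfin
  -- the finite set of transversals
  set S : Finset (Fin (d + 1) → E) := Fintype.piFinset B with hS
  have hSne : S.Nonempty := by
    rw [hS, Fintype.piFinset_nonempty]
    intro i
    exact convexHull_nonempty_iff.mp ⟨a, haB i⟩
  obtain ⟨t₀, ht₀S, ht₀min⟩ :=
    S.exists_min_image (fun t => infDist a (convexHull ℝ (Set.range t))) hSne
  have ht₀B : ∀ i, t₀ i ∈ B i := Fintype.mem_piFinset.mp ht₀S
  refine ⟨t₀, fun i => hBA i (ht₀B i), ?_⟩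
  by_contra hna
  -- nearest point
  set K := convexHull ℝ (Set.range t₀) with hK
  have hKconv : Convex ℝ K := convex_convexHull ℝ _
  have hKcompact : IsCompact K := (Set.finite_range t₀).isCompact_convexHull ℝ
  have hKne : K.Nonempty := convexHull_nonempty_iff.mpr (Set.range_nonempty _)
  obtain ⟨x, hxK, hxd⟩ := hKcompact.exists_infDist_eq_dist hKne a
  have hmin : ∀ y ∈ K, dist a x ≤ dist a y := fun y hy =>
    hxd ▸ infDist_le_dist_of_mem hy
  have hax : a ≠ x := fun h => hna (h ▸ hxK)
  -- variational inequality
  have hvar : ∀ y ∈ K, ⟪a - x, y - x⟫ ≤ 0 := by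
    intro y hy
    by_contra h
    push_neg at h
    obtain ⟨θ, hθ0, hθ1, hθlt⟩ := colorful_step h
    have hmem : x + θ • (y - x) ∈ K := by
      have h1 : (1 - θ) • x + θ • y ∈ K :=
        hKconv hxK hy (by linarith) hθ0.le (by ring)
      convert h1 using 1
      module
    exact absurd (hmin _ hmem) (not_le.mpr hθlt)
  -- Carathéodory with positive weights
  obtain ⟨ι, hι, z, w, hzr, haff, hwpos, hwsum, hzx⟩ :=
    eq_pos_convex_span_of_mem_convexHull hxK
  have hιne : Nonempty ι := by
    by_contra h
    rw [not_nonempty_iff] at h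
    rw [Finset.univ_eq_empty, Finset.sum_empty] at hwsum
    norm_num at hwsum
  -- every point of the support lies in the critical hyperplane
  have hzero : ∀ i, ⟪a - x, z i - x⟫ = 0 := by
    have hsum : ∑ i, w i * ⟪a - x, z i - x⟫ = 0 := by
      have h0 : ∑ i, w i • (z i - x) = 0 := by
        simp_rw [smul_sub, Finset.sum_sub_distrib, hzx, ← Finset.sum_smul, hwsum, one_smul,
          sub_self]
      calc ∑ i, w i * ⟪a - x, z i - x⟫ = ⟪a - x, ∑ i, w i • (z i - x)⟫ := by
            rw [inner_sum]; simp_rw [real_inner_smul_right]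
        _ = 0 := by rw [h0, inner_zero_right]
    have hterm : ∀ i ∈ Finset.univ, w i * ⟪a - x, z i - x⟫ ≤ 0 := fun i _ =>
      mul_nonpos_of_nonneg_of_nonpos (hwpos i).le
        (hvar _ (subset_convexHull ℝ _ (hzr (Set.mem_range_self i))))
    intro i
    have := (Finset.sum_eq_zero_iff_of_nonpos hterm).mp hsum i (Finset.mem_univ i)
    rcases mul_eq_zero.mp this with h | h
    · exact absurd h (hwpos i).ne'
    · exact h
  -- the support has at most d points
  set f : E →ₗ[ℝ] ℝ := (innerSL ℝ (a - x)).toLinearMap with hf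
  have hfne : f ≠ 0 := by
    intro h
    have h1 := congrFun (congrArg DFunLike.coe h) (a - x)
    simp only [hf, ContinuousLinearMap.coe_coe, innerSL_apply_apply, LinearMap.zero_apply] at h1
    exact hax (sub_eq_zero.mp (inner_self_eq_zero.mp h1))
  have hker : finrank ℝ (LinearMap.ker f) + 1 = finrank ℝ E :=
    Module.Dual.finrank_ker_add_one_of_ne_zero hfne
  have hspan : vectorSpan ℝ (Set.range z) ≤ LinearMap.ker f := by
    rw [vectorSpan_def, Submodule.span_le]
    rintro v ⟨p, hp, q, hq, rfl⟩
    obtain ⟨i, rfl⟩ := hp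
    obtain ⟨j, rfl⟩ := hq
    simp only [SetLike.mem_coe, LinearMap.mem_ker, hf, ContinuousLinearMap.coe_coe,
      innerSL_apply_apply, vsub_eq_sub]
    have heq : z i - z j = (z i - x) - (z j - x) := by abel
    rw [heq, inner_sub_right, hzero, hzero, sub_self]
  have hcard : Fintype.card ι ≤ d := by
    have h1 : 1 ≤ Fintype.card ι := Fintype.card_pos
    have h2 := haff.finrank_vectorSpan (Nat.sub_add_cancel h1).symm
    have hle : finrank ℝ (vectorSpan ℝ (Set.range z)) ≤ finrank ℝ (LinearMap.ker f) :=
      Submodule.finrank_mono hspan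
    omega
  -- choose an index not used by the support
  have hzex : ∀ i, ∃ j, t₀ j = z i := fun i => hzr (Set.mem_range_self i)
  choose g hg using hzex
  have hgns : ¬Function.Surjective g := by
    intro h
    have := Fintype.card_le_of_surjective g h
    simp only [Fintype.card_fin] at this
    omega
  unfold Function.Surjective at hgns
  push_neg at hgns
  obtain ⟨i₀, hi₀⟩ := hgns
  -- find a good replacement point in B i₀
  have hp : ∃ p ∈ B i₀, 0 < ⟪a - x, p - x⟫ := by
    by_contra h
    push_neg at h
    have hconv : Convex ℝ {y : E | ⟪a - x, y⟫ ≤ ⟪a - x, x⟫} :=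
      convex_halfSpace_le ⟨fun u v => inner_add_right _ _ _,
        fun c u => real_inner_smul_right _ _ _⟩ _
    have hsub : (B i₀ : Set E) ⊆ {y : E | ⟪a - x, y⟫ ≤ ⟪a - x, x⟫} := by
      intro p hpB
      have := h p hpB
      rw [inner_sub_right] at this
      simpa using this
    have h1 : ⟪a - x, a⟫ ≤ ⟪a - x, x⟫ := convexHull_min hsub hconv (haB i₀)
    have h2 : ⟪a - x, a - x⟫ ≤ 0 := by rw [inner_sub_right]; linarith
    have h3 : ⟪a - x, a - x⟫ = 0 := le_antisymm h2 real_inner_self_nonneg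
    exact hax (sub_eq_zero.mp (inner_self_eq_zero.mp h3))
  obtain ⟨p, hpB, hpc⟩ := hp
  obtain ⟨θ, hθ0, hθ1, hθlt⟩ := colorful_step hpc
  -- the improved transversal
  classical
  set t₁ := Function.update t₀ i₀ p with ht₁
  have ht₁S : t₁ ∈ S := by
    rw [hS, Fintype.mem_piFinset]
    intro j
    rcases eq_or_ne j i₀ with rfl | hj
    · simpa [ht₁] using hpB
    · simpa [ht₁, Function.update_of_ne hj] using ht₀B j
  set K₁ := convexHull ℝ (Set.range t₁) with hK₁
  have hzr₁ : ∀ i, z i ∈ Set.range t₁ := by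
    intro i
    refine ⟨g i, ?_⟩
    rw [ht₁, Function.update_of_ne (hi₀ i), hg]
  have hxK₁ : x ∈ K₁ := by
    have hmem := Finset.centerMass_mem_convexHull (Finset.univ : Finset ι)
      (fun i _ => (hwpos i).le) (by rw [hwsum]; norm_num)
      (fun i _ => hzr₁ i)
    rwa [Finset.centerMass, hwsum, inv_one, one_smul, hzx] at hmem
  have hpK₁ : p ∈ K₁ := subset_convexHull ℝ _ ⟨i₀, Function.update_self i₀ p t₀⟩
  have hyK₁ : x + θ • (p - x) ∈ K₁ := by
    have h1 : (1 - θ) • x + θ • p ∈ K₁ :=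
      (convex_convexHull ℝ _) hxK₁ hpK₁ (by linarith) hθ0.le (by ring)
    convert h1 using 1
    module
  have hlt : infDist a K₁ < infDist a K :=
    calc infDist a K₁ ≤ dist a (x + θ • (p - x)) := infDist_le_dist_of_mem hyK₁
      _ < dist a x := hθlt
      _ = infDist a K := hxd.symm
  exact absurd (ht₀min t₁ ht₁S) (not_le.mpr hlt)

/-- Colorful Carathéodory theorem (Bárány): if a point a lies in the convex hull of each
of d+1 sets A_1, ..., A_{d+1} ⊆ ℝ^d, then there is a transversal a_i ∈ A_i with
a ∈ conv{a_1, ..., a_{d+1}}. -/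
theorem colorful_caratheodory (d : ℕ) (A : Fin (d + 1) → Set (Fin d → ℝ))
    (a : Fin d → ℝ) (ha : ∀ i, a ∈ convexHull ℝ (A i)) :
    ∃ t : Fin (d + 1) → (Fin d → ℝ), (∀ i, t i ∈ A i) ∧
      a ∈ convexHull ℝ (Set.range t) := by
  classical
  let e : EuclideanSpace ℝ (Fin d) ≃ₗ[ℝ] (Fin d → ℝ) := WithLp.linearEquiv 2 ℝ (Fin d → ℝ)
  have hd : finrank ℝ (EuclideanSpace ℝ (Fin d)) ≤ d := le_of_eq finrank_euclideanSpace_fin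
  have ha' : ∀ i, e.symm a ∈ convexHull ℝ (⇑e.symm '' A i) := by
    intro i
    rw [← (IsLinearMap.mk (map_add e.symm) (map_smul e.symm)).image_convexHull]
    exact Set.mem_image_of_mem _ (ha i)
  obtain ⟨t, htA, hat⟩ := colorful_main hd (fun i => ⇑e.symm '' A i) (e.symm a) ha'
  refine ⟨fun i => e (t i), fun i => ?_, ?_⟩
  · obtain ⟨y, hy, hyt⟩ := htA i
    show e (t i) ∈ A i
    rw [← hyt, LinearEquiv.apply_symm_apply]
    exact hy
  · have hmem := Set.mem_image_of_mem e hat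
    rw [(IsLinearMap.mk (map_add e) (map_smul e)).image_convexHull,
      LinearEquiv.apply_symm_apply, ← Set.range_comp] at hmem
    exact hmem
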